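/- Let γ ∈ (0,1], σ > 0. Define h₋(x) = (σ - x(2a + x))/(2x) - √(γ²(σ + x²)² + 4γx²)/(2γx) for x ≠ 0. Then the derivative h₋'(x) is strictly negative for all x ≠ 0; in particular h₋ is strictly decreasing on (-∞,0) and on (0,∞). -/

import Mathlib

theorem stmt_3 (γ σ a : ℝ) (hγ0 : 0 < γ) (hγ1 : γ ≤ 1) (hσ : 0 < σ) :
    let h : ℝ → ℝ := fun x =>
      (σ - x * (2 * a + x)) / (2 * x)
        - Real.sqrt (γ ^ 2 * (σ + x ^ 2) ^ 2 + 4 * γ * x ^ 2) / (2 * γ * x)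
    (∀ x : ℝ, x ≠ 0 → deriv h x < 0) ∧
      StrictAntiOn h (Set.Iio 0) ∧ StrictAntiOn h (Set.Ioi 0) := by
  intro h
  have key : ∀ x : ℝ, x ≠ 0 → ∃ D : ℝ, HasDerivAt h D x ∧ D < 0 := by
    intro x hx
    have hx2 : (0:ℝ) < x ^ 2 := by positivity
    have hQpos : 0 < γ ^ 2 * (σ + x ^ 2) ^ 2 + 4 * γ * x ^ 2 := by positivity
    set s := Real.sqrt (γ ^ 2 * (σ + x ^ 2) ^ 2 + 4 * γ * x ^ 2) with hsdef
    have hs : 0 < s := Real.sqrt_pos.mpr hQpos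
    have hs2 : s ^ 2 = γ ^ 2 * (σ + x ^ 2) ^ 2 + 4 * γ * x ^ 2 := Real.sq_sqrt hQpos.le
    have d1 : HasDerivAt (fun y => σ - y * (2 * a + y)) (-(2*a) - 2*x) x := by
      have := ((hasDerivAt_id x).mul ((hasDerivAt_const x (2*a)).add (hasDerivAt_id x))).const_sub σ
      refine this.congr_deriv ?_
      simp only [Pi.add_apply, id_eq]
      ring
    have d2 : HasDerivAt (fun y : ℝ => 2 * y) 2 x := by
      simpa using (hasDerivAt_id x).const_mul 2
    have d3 := d1.div d2 (by simpa using hx : (2:ℝ) * x ≠ 0)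
    have e1 : HasDerivAt (fun y : ℝ => σ + y ^ 2) (2 * x) x := by
      simpa using (hasDerivAt_pow 2 x).const_add σ
    have dQ : HasDerivAt (fun y => γ ^ 2 * (σ + y ^ 2) ^ 2 + 4 * γ * y ^ 2)
        (4 * γ ^ 2 * x * (σ + x ^ 2) + 8 * γ * x) x := by
      have e2 := (e1.pow 2).const_mul (γ ^ 2)
      have e3 := (hasDerivAt_pow 2 x).const_mul (4 * γ)
      refine (e2.add e3).congr_deriv ?_
      push_cast
      ring
    have dS : HasDerivAt (fun y => Real.sqrt (γ ^ 2 * (σ + y ^ 2) ^ 2 + 4 * γ * y ^ 2))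
        ((4 * γ ^ 2 * x * (σ + x ^ 2) + 8 * γ * x) / (2 * s)) x := dQ.sqrt hQpos.ne'
    have d4 : HasDerivAt (fun y : ℝ => 2 * γ * y) (2 * γ) x := by
      simpa using (hasDerivAt_id x).const_mul (2 * γ)
    have hden : (2 : ℝ) * γ * x ≠ 0 := by
      exact mul_ne_zero (by positivity) hx
    have d5 := dS.div d4 hden
    have dh := d3.sub d5
    refine ⟨_, dh, ?_⟩
    -- show the derivative is negative
    have hM : (0:ℝ) < 4 * γ * x ^ 2 * s := by positivity
    have hR : 2 * γ * (σ + x ^ 2) * (γ * (σ + x ^ 2) - 2 * γ * x ^ 2 - s) < 0 := by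
      have h1 : 0 < 2 * γ * (σ + x ^ 2) := by positivity
      have h2 : γ * (σ + x ^ 2) - 2 * γ * x ^ 2 - s < 0 := by
        nlinarith [sq_nonneg (s - γ * (σ + x ^ 2)), sq_nonneg (s + γ * (σ + x ^ 2))]
      exact mul_neg_of_pos_of_neg h1 h2
    have hEq : ((-(2*a) - 2*x) * (2*x) - (σ - x * (2*a+x)) * 2) / (2*x) ^ 2
        - (((4 * γ ^ 2 * x * (σ + x ^ 2) + 8 * γ * x) / (2 * s)) * (2*γ*x) - s * (2*γ)) / (2*γ*x) ^ 2
        = (2 * γ * (σ + x ^ 2) * (γ * (σ + x ^ 2) - 2 * γ * x ^ 2 - s)) / (4 * γ * x ^ 2 * s) := by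
      rw [eq_div_iff hM.ne']
      field_simp
      linear_combination 8 * hs2
    rw [← hsdef, hEq]
    exact div_neg_of_neg_of_pos hR hM
  have hderiv : ∀ x : ℝ, x ≠ 0 → deriv h x < 0 := by
    intro x hx
    obtain ⟨D, hD, hDneg⟩ := key x hx
    rwa [hD.deriv]
  refine ⟨hderiv, ?_, ?_⟩
  · apply StrictAntiOn.mono (s := Set.Iio 0) ?_ le_rfl
    exact strictAntiOn_of_deriv_neg (convex_Iio 0) (fun x hx =>
      ((key x (ne_of_lt hx)).choose_spec.1.differentiableAt.continuousAt.continuousWithinAt))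
      (by
        intro x hx
        rw [interior_Iio] at hx
        exact hderiv x (ne_of_lt hx))
  · exact strictAntiOn_of_deriv_neg (convex_Ioi 0) (fun x hx =>
      ((key x (ne_of_gt hx)).choose_spec.1.differentiableAt.continuousAt.continuousWithinAt))
      (by
        intro x hx
        rw [interior_Ioi] at hx
        exact hderiv x (ne_of_gt hx))
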